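/- For x ∈ (0, 2), the equilibrium density satisfies the strict upper constraint ψ(x) < 2/x³. -/
import Mathlib


open Real

/-- For `x ∈ (0, 2)`, the equilibrium density satisfies the strict upper constraint
`ψ(x) < 2/x³`. -/
theorem psi_strict_upper_constraint (x : ℝ) (hx0 : 0 < x) (hx2 : x < 2) :
    (1 / π) * (4 * Real.arctan (x / Real.sqrt (4 - x ^ 2)) / x ^ 3
      - Real.sqrt (4 - x ^ 2) / x ^ 2) < 2 / x ^ 3 := by
  have hπ := Real.pi_pos
  have hx3 : (0:ℝ) < x ^ 3 := by positivity
  have hx2' : (0:ℝ) < x ^ 2 := by positivity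
  have hA : Real.arctan (x / Real.sqrt (4 - x ^ 2)) < π / 2 :=
    Real.arctan_lt_pi_div_two _
  have hs : (0:ℝ) ≤ Real.sqrt (4 - x ^ 2) / x ^ 2 := by positivity
  have h1 : 4 * Real.arctan (x / Real.sqrt (4 - x ^ 2)) / x ^ 3 < 2 * π / x ^ 3 := by
    apply div_lt_div_of_pos_right _ hx3
    linarith
  have h2 : (1 / π) * (2 * π / x ^ 3) = 2 / x ^ 3 := by
    field_simp
  calc (1 / π) * (4 * Real.arctan (x / Real.sqrt (4 - x ^ 2)) / x ^ 3
      - Real.sqrt (4 - x ^ 2) / x ^ 2)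
      ≤ (1 / π) * (4 * Real.arctan (x / Real.sqrt (4 - x ^ 2)) / x ^ 3) := by
        apply mul_le_mul_of_nonneg_left _ (by positivity)
        linarith
    _ < (1 / π) * (2 * π / x ^ 3) := by
        apply mul_lt_mul_of_pos_left h1 (by positivity)
    _ = 2 / x ^ 3 := h2
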